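/- For w = e^{iβ} + δ with δ ∈ ℂ small, the Möbius map m_ℍ(w) = i(w−1)/(w+1) satisfies |m_ℍ(e^{iβ}+δ) − m_ℍ(e^{iβ})| = (1/2)·e^c·|δ|·(1 + O(|δ|)), where the implicit constant is uniform for c < 1. -/

import Mathlib

open Complex Real

/-- For `w = e^{iβ} + δ` with `δ ∈ ℂ` small,
`|m_ℍ(e^{iβ}+δ) − m_ℍ(e^{iβ})| = (1/2)·e^c·|δ|·(1 + O(|δ|))`,
uniformly for `c < 1`. -/
theorem mobius_local_scaling_at_base_point :
    ∃ C > (0:ℝ), ∃ ε₀ > (0:ℝ), ∀ c : ℝ, 0 < c → c < 1 →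
      ∀ β : ℝ, β ∈ Set.Ioo 0 π →
        Complex.exp (Complex.I * (β : ℂ)) =
          (2 * Real.exp (-c) - 1 : ℝ) +
            (2 * Real.exp (-c) * Real.sqrt (Real.exp c - 1) : ℝ) * Complex.I →
      ∀ δ : ℂ, ‖δ‖ ≤ ε₀ →
        ∃ e : ℝ, |e| ≤ C * ‖δ‖ ∧
          ‖(Complex.I * ((Complex.exp (Complex.I * (β : ℂ)) + δ) - 1) /
                  ((Complex.exp (Complex.I * (β : ℂ)) + δ) + 1) -
                Complex.I * (Complex.exp (Complex.I * (β : ℂ)) - 1) /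
                  (Complex.exp (Complex.I * (β : ℂ)) + 1))‖
            = (1 / 2) * Real.exp c * ‖δ‖ * (1 + e) := by
  refine ⟨2, by norm_num, 1/2, by norm_num, ?_⟩
  intro c hc hc1 β hβ hz δ hδ
  set z := Complex.exp (Complex.I * (β:ℂ)) with hzdef
  -- basic exponential facts
  have hee : Real.exp (-c) * Real.exp c = 1 := by
    rw [← Real.exp_add]; simp
  have hec1 : (1:ℝ) ≤ Real.exp c := by
    simpa using Real.exp_le_exp.2 hc.le
  have hsq : Real.sqrt (Real.exp c - 1) ^ 2 = Real.exp c - 1 :=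
    Real.sq_sqrt (by linarith)
  -- real and imaginary parts of z
  have hre : (z + 1).re = 2 * Real.exp (-c) := by
    rw [hz]
    simp only [Complex.add_re, Complex.ofReal_re, Complex.mul_re, Complex.I_re,
      Complex.I_im, Complex.ofReal_im, Complex.one_re]
    ring
  have him : (z + 1).im = 2 * Real.exp (-c) * Real.sqrt (Real.exp c - 1) := by
    rw [hz]
    simp only [Complex.add_im, Complex.ofReal_im, Complex.mul_im, Complex.I_re,
      Complex.I_im, Complex.ofReal_re, Complex.one_im]
    ring
  set A := ‖z + 1‖ with hA
  have hA2 : A ^ 2 = 4 * Real.exp (-c) := by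
    rw [hA, Complex.sq_norm, Complex.normSq_apply, hre, him]
    nlinarith [hsq, hee, Real.exp_pos (-c)]
  -- lower bound on A : A² = 4 e^{-c} > 4/e > 36/25
  have hexplt : Real.exp c < Real.exp 1 := Real.exp_lt_exp.2 hc1
  have he1 : Real.exp 1 < 2.7182818286 := Real.exp_one_lt_d9
  have hA2lb : (36:ℝ)/25 < A ^ 2 := by
    rw [hA2]
    nlinarith [Real.exp_pos (-c), Real.exp_pos c]
  have hAnn : (0:ℝ) ≤ A := norm_nonneg _
  have hAlb : (6:ℝ)/5 < A := by nlinarith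
  set B := ‖z + δ + 1‖ with hB
  have hBA : |B - A| ≤ ‖δ‖ := by
    have := abs_norm_sub_norm_le (z + δ + 1) (z + 1)
    have h2 : (z + δ + 1) - (z + 1) = δ := by ring
    rw [h2] at this
    simpa [hA, hB] using this
  have hBlb : (7:ℝ)/10 < B := by
    have h1 := abs_le.mp hBA
    linarith [h1.1]
  have hBpos : (0:ℝ) < B := by linarith
  have hApos : (0:ℝ) < A := by linarith
  -- nonvanishing denominators
  have hz1 : z + 1 ≠ 0 := by
    intro h; rw [hA, h] at hApos; simp at hApos
  have hz2 : z + δ + 1 ≠ 0 := by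
    intro h; rw [hB, h] at hBpos; simp at hBpos
  -- the key algebraic identity
  have key : Complex.I * ((z + δ) - 1) / ((z + δ) + 1) - Complex.I * (z - 1) / (z + 1)
      = 2 * Complex.I * δ / ((z + δ + 1) * (z + 1)) := by
    have hz2' : (z + δ) + 1 ≠ 0 := by simpa [add_assoc] using hz2
    field_simp
    ring
  refine ⟨A / B - 1, ?_, ?_⟩
  · -- error bound
    have h0 : A / B - 1 = (A - B) / B := by field_simp
    rw [h0, abs_div, abs_of_pos hBpos, abs_sub_comm, div_le_iff₀ hBpos]
    calc |B - A| ≤ ‖δ‖ := hBA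
      _ ≤ 2 * ‖δ‖ * B := by nlinarith [norm_nonneg δ]
  · rw [key]
    have habs : ‖2 * Complex.I * δ / ((z + δ + 1) * (z + 1))‖
        = 2 * ‖δ‖ / (B * A) := by
      rw [norm_div, norm_mul, norm_mul, norm_mul, Complex.norm_two, Complex.norm_I,
        ← hA, ← hB]
      ring
    rw [habs]
    have hec : Real.exp c = 4 / A ^ 2 := by
      field_simp
      nlinarith [hee]
    rw [hec]
    field_simp
    ring
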